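/- (Lemma 1, one hidden layer.) Let ‖·‖ be a norm on ℝⁿ with dual norm ‖v‖_* = sup over t with ‖t‖ ≤ 1 of |⟨t, v⟩|. Let A be a real p×n matrix, b, c ∈ ℝᵖ, and F(x) = Σⱼ cⱼ · ReLU((A x + b)ⱼ). Let Ω ⊆ ℝⁿ be convex and let L ∈ ℝ be such that for every x ∈ Ω and every u ∈ ℝᵖ with uⱼ ∈ G((A x + b)ⱼ) for all j, one has ‖Aᵀ diag(u) c‖_* ≤ L. Then for all x, y ∈ Ω, |F(y) - F(x)| ≤ L · ‖y - x‖, i.e., L is a Lipschitz constant for F on Ω with respect to ‖·‖. -/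

import Mathlib

open Matrix

/-- The ReLU function. -/
noncomputable def ReLU (x : ℝ) : ℝ := max 0 x

/-- The generalized derivative of ReLU: `G(x) = {1}` for `x > 0`, `{0}` for `x < 0`,
and `{0, 1}` for `x = 0`. -/
noncomputable def G (x : ℝ) : Set ℝ :=
  if 0 < x then {1} else if x < 0 then {0} else {0, 1}

/-- The dual norm of a norm `N` on `ℝⁿ`:
`‖v‖_* = sup { |⟨t, v⟩| : N t ≤ 1 }`. -/
noncomputable def dualNorm (n : ℕ) (N : (Fin n → ℝ) → ℝ) (v : Fin n → ℝ) : ℝ :=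
  sSup {r : ℝ | ∃ t : Fin n → ℝ, N t ≤ 1 ∧ r = |∑ i, t i * v i|}

/-- Type synonym to endow with the custom norm `N`. -/
def NSyn (n : ℕ) (_N : (Fin n → ℝ) → ℝ) : Type := Fin n → ℝ

instance (n : ℕ) (N : (Fin n → ℝ) → ℝ) : AddCommGroup (NSyn n N) :=
  inferInstanceAs (AddCommGroup (Fin n → ℝ))

noncomputable instance (n : ℕ) (N : (Fin n → ℝ) → ℝ) : Module ℝ (NSyn n N) :=
  inferInstanceAs (Module ℝ (Fin n → ℝ))

instance (n : ℕ) (N : (Fin n → ℝ) → ℝ) : FiniteDimensional ℝ (NSyn n N) :=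
  inferInstanceAs (FiniteDimensional ℝ (Fin n → ℝ))

lemma coord_bound (n : ℕ) (N : (Fin n → ℝ) → ℝ)
    (Nadd : ∀ a b : Fin n → ℝ, N (a + b) ≤ N a + N b)
    (Nsmul : ∀ (r : ℝ) (a : Fin n → ℝ), N (r • a) = |r| * N a)
    (Ndef : ∀ a : Fin n → ℝ, N a = 0 → a = 0) :
    ∃ C : ℝ, 0 ≤ C ∧ ∀ t : Fin n → ℝ, ∀ i, |t i| ≤ C * N t := by
  have h0 : N 0 = 0 := by simpa using Nsmul 0 0
  letI : NormedAddCommGroup (NSyn n N) := AddGroupNorm.toNormedAddCommGroup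
    { toFun := N
      map_zero' := h0
      add_le' := Nadd
      neg' := fun a => by
        have h : (@Neg.neg (Fin n → ℝ) _ a) = (-1:ℝ) • (show Fin n → ℝ from a) :=
          (neg_one_smul ℝ _).symm
        show N (@Neg.neg (Fin n → ℝ) _ a) = N a
        rw [h, Nsmul, abs_neg, abs_one, one_mul]
      eq_zero_of_map_eq_zero' := Ndef }
  letI : NormedSpace ℝ (NSyn n N) := ⟨fun r a => (Nsmul r a).le⟩
  let φ : Fin n → (NSyn n N →L[ℝ] ℝ) := fun i =>
    LinearMap.toContinuousLinearMap (LinearMap.proj (R := ℝ) (φ := fun _ : Fin n => ℝ) i)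
  refine ⟨∑ i, ‖φ i‖, Finset.sum_nonneg fun i _ => norm_nonneg _, fun t i => ?_⟩
  have h1 : |t i| ≤ ‖φ i‖ * N t := (φ i).le_opNorm t
  have h2 : ‖φ i‖ ≤ ∑ j, ‖φ j‖ :=
    Finset.single_le_sum (fun j _ => norm_nonneg (φ j)) (Finset.mem_univ i)
  have h3 : (0:ℝ) ≤ N t := @norm_nonneg (NSyn n N) _ t
  exact h1.trans (mul_le_mul_of_nonneg_right h2 h3)

lemma NNonneg (n : ℕ) (N : (Fin n → ℝ) → ℝ)
    (Nadd : ∀ a b : Fin n → ℝ, N (a + b) ≤ N a + N b)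
    (Nsmul : ∀ (r : ℝ) (a : Fin n → ℝ), N (r • a) = |r| * N a) :
    ∀ a, 0 ≤ N a := by
  intro a
  have h0 : N 0 = 0 := by simpa using Nsmul 0 0
  have h2 : N (-a) = N a := by simpa using Nsmul (-1) a
  have h1 := Nadd a (-a)
  rw [add_neg_cancel, h0, h2] at h1
  linarith

lemma pairing_le (n : ℕ) (N : (Fin n → ℝ) → ℝ)
    (Nadd : ∀ a b : Fin n → ℝ, N (a + b) ≤ N a + N b)
    (Nsmul : ∀ (r : ℝ) (a : Fin n → ℝ), N (r • a) = |r| * N a)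
    (Ndef : ∀ a : Fin n → ℝ, N a = 0 → a = 0)
    (v w : Fin n → ℝ) :
    |∑ i, w i * v i| ≤ dualNorm n N v * N w := by
  obtain ⟨C, hC0, hC⟩ := coord_bound n N Nadd Nsmul Ndef
  have Nng := NNonneg n N Nadd Nsmul
  have h0 : N 0 = 0 := by simpa using Nsmul 0 0
  have bdd : BddAbove {r : ℝ | ∃ t : Fin n → ℝ, N t ≤ 1 ∧ r = |∑ i, t i * v i|} := by
    refine ⟨∑ i, C * |v i|, fun r hr => ?_⟩
    obtain ⟨t, ht, rfl⟩ := hr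
    calc |∑ i, t i * v i| ≤ ∑ i, |t i * v i| := Finset.abs_sum_le_sum_abs _ _
      _ ≤ ∑ i, C * |v i| := by
        refine Finset.sum_le_sum fun i _ => ?_
        rw [abs_mul]
        refine mul_le_mul_of_nonneg_right ((hC t i).trans ?_) (abs_nonneg _)
        calc C * N t ≤ C * 1 := mul_le_mul_of_nonneg_left ht hC0
          _ = C := mul_one C
  by_cases hw : N w = 0
  · have hw0 : w = 0 := Ndef w hw
    subst hw0
    simp [hw]
  · have hwpos : 0 < N w := lt_of_le_of_ne (Nng w) (Ne.symm hw)
    set t : Fin n → ℝ := (N w)⁻¹ • w with htdef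
    have ht : N t = 1 := by
      rw [htdef, Nsmul, abs_of_pos (inv_pos.mpr hwpos), inv_mul_cancel₀ hw]
    have hmem : |∑ i, t i * v i| ∈
        {r : ℝ | ∃ t : Fin n → ℝ, N t ≤ 1 ∧ r = |∑ i, t i * v i|} := ⟨t, ht.le, rfl⟩
    have hle : |∑ i, t i * v i| ≤ dualNorm n N v := le_csSup bdd hmem
    have hts : ∑ i, t i * v i = (N w)⁻¹ * ∑ i, w i * v i := by
      rw [Finset.mul_sum]
      refine Finset.sum_congr rfl fun i _ => ?_
      simp [htdef, mul_assoc]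
    rw [hts, abs_mul, abs_of_pos (inv_pos.mpr hwpos)] at hle
    calc |∑ i, w i * v i| = N w * ((N w)⁻¹ * |∑ i, w i * v i|) := by field_simp
      _ ≤ N w * dualNorm n N v := mul_le_mul_of_nonneg_left hle hwpos.le
      _ = dualNorm n N v * N w := mul_comm _ _

/-- Lemma 1, one hidden layer: if `‖Aᵀ diag(u) c‖_* ≤ L` for every `x ∈ Ω` and every
`u` with `uⱼ ∈ G((Ax+b)ⱼ)`, then `L` is a Lipschitz constant for
`F(x) = Σⱼ cⱼ ReLU((Ax+b)ⱼ)` on the convex set `Ω` w.r.t. the norm `N`. -/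
theorem one_layer_lipschitz_bound (n p : ℕ)
    (N : (Fin n → ℝ) → ℝ)
    (Nadd : ∀ a b : Fin n → ℝ, N (a + b) ≤ N a + N b)
    (Nsmul : ∀ (r : ℝ) (a : Fin n → ℝ), N (r • a) = |r| * N a)
    (Ndef : ∀ a : Fin n → ℝ, N a = 0 → a = 0)
    (A : Matrix (Fin p) (Fin n) ℝ) (b c : Fin p → ℝ)
    (F : (Fin n → ℝ) → ℝ)
    (hF : ∀ x, F x = ∑ j, c j * ReLU ((A.mulVec x + b) j))
    (Ω : Set (Fin n → ℝ)) (hΩ : Convex ℝ Ω) (L : ℝ)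
    (hL : ∀ x ∈ Ω, ∀ u : Fin p → ℝ, (∀ j, u j ∈ G ((A.mulVec x + b) j)) →
      dualNorm n N ((Aᵀ * Matrix.diagonal u).mulVec c) ≤ L) :
    ∀ x ∈ Ω, ∀ y ∈ Ω, |F y - F x| ≤ L * N (y - x) := by
  intro x hx y hy
  have Nng := NNonneg n N Nadd Nsmul
  set α : Fin p → ℝ := fun j => (A.mulVec x + b) j with hα
  set β : Fin p → ℝ := fun j => A.mulVec (y - x) j with hβ
  have key : ∀ t : ℝ, ∀ j, (A.mulVec (x + t • (y - x)) + b) j = α j + t * β j := by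
    intro t j
    simp only [hα, hβ, Matrix.mulVec_add, Matrix.mulVec_smul, Pi.add_apply, Pi.smul_apply,
      smul_eq_mul]
    ring
  set g : ℝ → ℝ := fun t => ∑ j, c j * ReLU (α j + t * β j) with hgdef
  have hg : ∀ t : ℝ, F (x + t • (y - x)) = g t := by
    intro t
    rw [hF, hgdef]
    exact Finset.sum_congr rfl fun j _ => by rw [key]
  have hmem : ∀ t ∈ Set.Icc (0:ℝ) 1, x + t • (y - x) ∈ Ω := by
    intro t ht
    have h := hΩ hx hy (by linarith [ht.2] : (0:ℝ) ≤ 1 - t) ht.1 (by ring)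
    have heq : (1 - t) • x + t • y = x + t • (y - x) := by module
    rwa [heq] at h
  set u : ℝ → Fin p → ℝ := fun t j =>
    if 0 < α j + t * β j then 1 else if α j + t * β j = 0 ∧ 0 < β j then 1 else 0 with hu
  set f' : ℝ → ℝ := fun t => ∑ j, c j * (u t j * β j) with hf'def
  -- right derivative everywhere
  have hderiv : ∀ t : ℝ, HasDerivWithinAt g (f' t) (Set.Ici t) t := by
    intro t
    apply HasDerivWithinAt.fun_sum
    intro j _
    have hlin : HasDerivWithinAt (fun s : ℝ => α j + s * β j) (β j) (Set.Ici t) t :=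
      ((hasDerivAt_mul_const (β j)).const_add (α j)).hasDerivWithinAt
    have hmain : HasDerivWithinAt (fun s : ℝ => ReLU (α j + s * β j)) (u t j * β j)
        (Set.Ici t) t := by
      rcases lt_trichotomy (α j + t * β j) 0 with hneg | hzero | hpos
      · have hu0 : u t j = 0 := by
          simp only [hu]
          rw [if_neg (by linarith), if_neg (by rintro ⟨h1, _⟩; linarith)]
        rw [hu0, zero_mul]
        have hO : {s : ℝ | α j + s * β j < 0} ∈ nhds t :=
          (isOpen_lt (by fun_prop) continuous_const).mem_nhds hneg
        refine (hasDerivWithinAt_const t (Set.Ici t) 0).congr_of_eventuallyEq ?_ ?_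
        · exact Filter.eventuallyEq_of_mem (nhdsWithin_le_nhds hO)
            (fun s hs => by
              simp only [Set.mem_setOf_eq] at hs
              simp [ReLU, max_eq_left hs.le])
        · simp [ReLU, max_eq_left hneg.le]
      · rcases lt_or_ge 0 (β j) with hb | hb
        · have hu1 : u t j = 1 := by
            simp only [hu]
            rw [if_neg (by linarith), if_pos ⟨hzero, hb⟩]
          rw [hu1, one_mul]
          refine hlin.congr (fun s hs => ?_) ?_
          · have : 0 ≤ α j + s * β j := by
              have : t ≤ s := hs
              nlinarith
            simp [ReLU, max_eq_right this]
          · simp [ReLU, max_eq_right hzero.ge]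
        · have hu0 : u t j = 0 := by
            simp only [hu]
            rw [if_neg (by linarith), if_neg (by rintro ⟨_, h2⟩; linarith)]
          rw [hu0, zero_mul]
          refine (hasDerivWithinAt_const t (Set.Ici t) 0).congr (fun s hs => ?_) ?_
          · have : α j + s * β j ≤ 0 := by
              have : t ≤ s := hs
              nlinarith
            simp [ReLU, max_eq_left this]
          · simp [ReLU, max_eq_left hzero.le]
      · have hu1 : u t j = 1 := by
          simp only [hu]
          rw [if_pos hpos]
        rw [hu1, one_mul]
        have hO : {s : ℝ | 0 < α j + s * β j} ∈ nhds t :=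
          (isOpen_lt continuous_const (by fun_prop)).mem_nhds hpos
        refine hlin.congr_of_eventuallyEq ?_ ?_
        · exact Filter.eventuallyEq_of_mem (nhdsWithin_le_nhds hO)
            (fun s hs => by
              simp only [Set.mem_setOf_eq] at hs
              simp [ReLU, max_eq_right hs.le])
        · simp [ReLU, max_eq_right hpos.le]
    exact hmain.const_mul (c j)
  -- bound on the derivative
  have hβ' : ∀ j, β j = ∑ i, A j i * (y - x) i := fun j => by
    simp [hβ, Matrix.mulVec, dotProduct]
  have hbound : ∀ t ∈ Set.Ico (0:ℝ) 1, ‖f' t‖ ≤ L * N (y - x) := by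
    intro t ht
    have hxt : x + t • (y - x) ∈ Ω := hmem t ⟨ht.1, ht.2.le⟩
    have huG : ∀ j, u t j ∈ G ((A.mulVec (x + t • (y - x)) + b) j) := by
      intro j
      rw [key t j]
      rcases lt_trichotomy (α j + t * β j) 0 with hn | hz | hp
      · have : u t j = 0 := by
          simp only [hu]
          rw [if_neg (by linarith), if_neg (by rintro ⟨h1, _⟩; linarith)]
        simp [G, this, hn, not_lt.mpr hn.le]
      · have : u t j = 1 ∨ u t j = 0 := by
          simp only [hu]
          split_ifs <;> simp
        rcases this with h | h <;> simp [G, h, hz]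
      · have : u t j = 1 := by simp only [hu]; rw [if_pos hp]
        simp [G, this, hp]
    have hdual := hL _ hxt (u t) huG
    have hsum : f' t = ∑ i, (y - x) i * ((Aᵀ * Matrix.diagonal (u t)).mulVec c) i := by
      calc f' t = ∑ j, ∑ i, (y - x) i * (A j i * u t j * c j) := by
            refine Finset.sum_congr rfl fun j _ => ?_
            rw [hβ' j, Finset.mul_sum, Finset.mul_sum]
            exact Finset.sum_congr rfl fun i _ => by ring
        _ = ∑ i, ∑ j, (y - x) i * (A j i * u t j * c j) := Finset.sum_comm
        _ = ∑ i, (y - x) i * ((Aᵀ * Matrix.diagonal (u t)).mulVec c) i := by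
            refine Finset.sum_congr rfl fun i _ => ?_
            simp only [Matrix.mulVec, dotProduct, Matrix.mul_diagonal,
              Matrix.transpose_apply, Finset.mul_sum]
    rw [Real.norm_eq_abs, hsum]
    calc |∑ i, (y - x) i * ((Aᵀ * Matrix.diagonal (u t)).mulVec c) i|
        ≤ dualNorm n N ((Aᵀ * Matrix.diagonal (u t)).mulVec c) * N (y - x) :=
          pairing_le n N Nadd Nsmul Ndef _ _
      _ ≤ L * N (y - x) := mul_le_mul_of_nonneg_right hdual (Nng _)
  -- continuity
  have hgc : Continuous g := by
    apply continuous_finset_sum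
    intro j _
    simp only [ReLU]
    fun_prop
  have hmvt := norm_image_sub_le_of_norm_deriv_right_le_segment (f := g) (a := 0) (b := 1)
    hgc.continuousOn (fun t _ => hderiv t) hbound 1 (by norm_num)
  have hg1 : g 1 = F y := by
    rw [← hg 1, one_smul, add_sub_cancel]
  have hg0 : g 0 = F x := by
    rw [← hg 0, zero_smul, add_zero]
  rw [hg1, hg0, Real.norm_eq_abs] at hmvt
  linarith [hmvt]
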